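/- Let Σ be a finite alphabet and f : Σ* → ℝ a function on strings. Then f can be computed by a weighted automaton (i.e., there exist r ∈ ℕ, vectors α₀, α∞ ∈ ℝ^r and matrices M_σ ∈ ℝ^{r×r} for each σ ∈ Σ such that f(σ₁…σₙ) = α₀ᵀ M_{σ₁} ⋯ M_{σₙ} α∞ for every string, with the empty product being the identity) if and only if the rank of the Hankel matrix of f is finite; moreover, in that case this rank is equal to the minimal dimension r over all such linear representations computing f. -/

import Mathlib

open Matrix

/-- The ordered product `M_w = M_{σ₁} ⋯ M_{σₙ}` for a string `w = σ₁…σₙ`. -/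
def wordProd {Γ : Type*} {r : ℕ} (M : Γ → Matrix (Fin r) (Fin r) ℝ) (w : List Γ) :
    Matrix (Fin r) (Fin r) ℝ :=
  (w.map M).prod

/-- The linear representation `(α₀, M, αω)` computes `f`. -/
def Computes {Γ : Type*} {r : ℕ} (α₀ : Fin r → ℝ) (M : Γ → Matrix (Fin r) (Fin r) ℝ)
    (αω : Fin r → ℝ) (f : List Γ → ℝ) : Prop :=
  ∀ w : List Γ, f w = α₀ ⬝ᵥ (wordProd M w).mulVec αω

/-- The rank of the Hankel matrix of `f`: the dimension of the span of its rows
`v ↦ f (u ++ v)` inside the space of functions `Γ* → ℝ`. -/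
noncomputable def hankelRank {Γ : Type*} (f : List Γ → ℝ) : Cardinal :=
  Module.rank ℝ
    ↥(Submodule.span ℝ (Set.range fun u : List Γ => fun v : List Γ => f (u ++ v)))

namespace HankelAux

variable {Γ : Type*} (f : List Γ → ℝ)

/-- Row of the Hankel matrix. -/
def row (u : List Γ) : List Γ → ℝ := fun v => f (u ++ v)

/-- The row space. -/
noncomputable def S : Submodule ℝ (List Γ → ℝ) :=
  Submodule.span ℝ (Set.range (row f))

lemma hankelRank_eq : hankelRank f = Module.rank ℝ ↥(S f) := rfl

lemma wordProd_append {r : ℕ} (M : Γ → Matrix (Fin r) (Fin r) ℝ) (u v : List Γ) :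
    wordProd M (u ++ v) = wordProd M u * wordProd M v := by
  simp [wordProd]

/-- Upper bound: any representation of dimension `r` bounds the Hankel rank. -/
lemma rank_le {r : ℕ} {α₀ αω : Fin r → ℝ} {M : Γ → Matrix (Fin r) (Fin r) ℝ}
    (h : Computes α₀ M αω f) : Module.rank ℝ ↥(S f) ≤ (r : Cardinal) := by
  set g : Fin r → (List Γ → ℝ) := fun i => fun v => (wordProd M v).mulVec αω i with hg
  have hsub : S f ≤ Submodule.span ℝ (Set.range g) := by
    rw [S, Submodule.span_le]
    rintro _ ⟨u, rfl⟩
    have hrow : row f u = ∑ i, (vecMul α₀ (wordProd M u)) i • g i := by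
      funext v
      rw [row, h (u ++ v), wordProd_append, ← Matrix.mulVec_mulVec,
        Matrix.dotProduct_mulVec]
      simp [dotProduct, hg, Finset.sum_apply]
    rw [hrow]
    exact Submodule.sum_mem _ fun i _ =>
      Submodule.smul_mem _ _ (Submodule.subset_span ⟨i, rfl⟩)
  calc Module.rank ℝ ↥(S f) ≤ Module.rank ℝ ↥(Submodule.span ℝ (Set.range g)) :=
        Submodule.rank_mono hsub
    _ ≤ Cardinal.mk (Set.range g) := rank_span_le _
    _ ≤ (r : Cardinal) := by simpa using Cardinal.mk_range_le_lift (f := g)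

/-- The shift operator. -/
def T (σ : Γ) : (List Γ → ℝ) →ₗ[ℝ] (List Γ → ℝ) where
  toFun g := fun v => g (σ :: v)
  map_add' _ _ := rfl
  map_smul' _ _ := rfl

lemma T_mapsTo (σ : Γ) : ∀ x ∈ S f, T σ x ∈ S f := by
  intro x hx
  have : Submodule.map (T (Γ := Γ) σ) (S f) ≤ S f := by
    rw [S, Submodule.map_span, Submodule.span_le]
    rintro _ ⟨_, ⟨u, rfl⟩, rfl⟩
    refine Submodule.subset_span ⟨u ++ [σ], ?_⟩
    funext v
    simp [row, T, List.append_assoc]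
  exact this ⟨x, hx, rfl⟩

lemma f_mem : f ∈ S f :=
  Submodule.subset_span ⟨[], by funext v; simp [row]⟩

lemma construct [FiniteDimensional ℝ ↥(S f)] :
    ∃ (α₀ αω : Fin (Module.finrank ℝ ↥(S f)) → ℝ)
      (M : Γ → Matrix (Fin (Module.finrank ℝ ↥(S f))) (Fin (Module.finrank ℝ ↥(S f))) ℝ),
      Computes α₀ M αω f := by
  set n := Module.finrank ℝ ↥(S f)
  let b : Module.Basis (Fin n) ℝ ↥(S f) := Module.finBasis ℝ ↥(S f)
  let Tr : Γ → ↥(S f) →ₗ[ℝ] ↥(S f) := fun σ => (T σ).restrict (T_mapsTo f σ)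
  let M : Γ → Matrix (Fin n) (Fin n) ℝ := fun σ => (LinearMap.toMatrix b b (Tr σ))ᵀ
  let αω : Fin n → ℝ := fun i => (b i : List Γ → ℝ) []
  have key : ∀ (w : List Γ) (s : ↥(S f)),
      (s : List Γ → ℝ) w = (⇑(b.repr s)) ⬝ᵥ (wordProd M w).mulVec αω := by
    intro w
    induction w with
    | nil =>
      intro s
      rw [show wordProd M [] = 1 from rfl, Matrix.one_mulVec]
      conv_lhs => rw [← b.sum_repr s]
      simp [dotProduct, αω, Finset.sum_apply]
      conv_lhs => rw [← b.sum_repr s]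
      simp only [Submodule.coe_sum, Submodule.coe_smul, Finset.sum_apply, Pi.smul_apply, smul_eq_mul]
    | cons σ w' ih =>
      intro s
      have h1 : (s : List Γ → ℝ) (σ :: w') = ((Tr σ s : ↥(S f)) : List Γ → ℝ) w' := rfl
      rw [h1, ih (Tr σ s), show wordProd M (σ :: w') = M σ * wordProd M w' by simp [wordProd],
        ← Matrix.mulVec_mulVec, Matrix.dotProduct_mulVec (v := ⇑(b.repr s)),
        show M σ = ((LinearMap.toMatrix b b) (Tr σ))ᵀ from rfl, Matrix.vecMul_transpose,
        LinearMap.toMatrix_mulVec_repr]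
  refine ⟨⇑(b.repr ⟨f, f_mem f⟩), αω, M, fun w => ?_⟩
  exact key w ⟨f, f_mem f⟩

end HankelAux

theorem statement0 {Γ : Type*} [Fintype Γ] (f : List Γ → ℝ) :
    ((∃ (r : ℕ) (α₀ αω : Fin r → ℝ) (M : Γ → Matrix (Fin r) (Fin r) ℝ),
        Computes α₀ M αω f) ↔ hankelRank f < Cardinal.aleph0) ∧
    (hankelRank f < Cardinal.aleph0 →
      hankelRank f =
        (sInf {r : ℕ | ∃ (α₀ αω : Fin r → ℝ) (M : Γ → Matrix (Fin r) (Fin r) ℝ),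
          Computes α₀ M αω f} : ℕ)) := by
  rw [HankelAux.hankelRank_eq]
  constructor
  · constructor
    · rintro ⟨r, α₀, αω, M, h⟩
      exact lt_of_le_of_lt (HankelAux.rank_le f h) (Cardinal.nat_lt_aleph0 r)
    · intro h
      haveI : Module.Free ℝ ↥(HankelAux.S f) := Module.Free.of_divisionRing ℝ _
      haveI : Module.Finite ℝ ↥(HankelAux.S f) := Module.rank_lt_aleph0_iff.mp h
      obtain ⟨α₀, αω, M, hc⟩ := HankelAux.construct f
      exact ⟨_, α₀, αω, M, hc⟩
  · intro h
    haveI : Module.Free ℝ ↥(HankelAux.S f) := Module.Free.of_divisionRing ℝ _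
    haveI : Module.Finite ℝ ↥(HankelAux.S f) := Module.rank_lt_aleph0_iff.mp h
    obtain ⟨γ₀, γω, N₀, hc⟩ := HankelAux.construct f
    have n := Module.finrank ℝ ↥(HankelAux.S f)
    have hmem : Module.finrank ℝ ↥(HankelAux.S f) ∈ {r : ℕ | ∃ (α₀ αω : Fin r → ℝ) (M : Γ → Matrix (Fin r) (Fin r) ℝ),
        Computes α₀ M αω f} := ⟨γ₀, γω, N₀, hc⟩
    have hlb : ∀ m ∈ {r : ℕ | ∃ (α₀ αω : Fin r → ℝ) (M : Γ → Matrix (Fin r) (Fin r) ℝ),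
        Computes α₀ M αω f}, Module.finrank ℝ ↥(HankelAux.S f) ≤ m := by
      rintro m ⟨β₀, βω, N, hN⟩
      have := HankelAux.rank_le f hN
      rw [← Module.finrank_eq_rank ℝ ↥(HankelAux.S f)] at this
      exact_mod_cast this
    have : sInf {r : ℕ | ∃ (α₀ αω : Fin r → ℝ) (M : Γ → Matrix (Fin r) (Fin r) ℝ),
        Computes α₀ M αω f} = Module.finrank ℝ ↥(HankelAux.S f) := le_antisymm (Nat.sInf_le hmem) (le_csInf ⟨_, hmem⟩ hlb)
    rw [this, Module.finrank_eq_rank]
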